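/- Every connected complete split graph is globally synchronizing: if G is a graph whose vertex set is partitioned into a nonempty clique C and an independent set I, where every vertex of C is adjacent to every other vertex of C and to every vertex of I, and no two vertices of I are adjacent, then every second-order stationary point θ of the Kuramoto energy E_G(θ) = (1/2)·Σ_{i,j} A_{ij}(1 − cos(θ_i − θ_j)) is a synchronized state, i.e., all phasors v_i = (cos θ_i, sin θ_i) are equal. -/

import Mathlib

open Finset

/-- The phasor of vertex `i` at state `θ`: the unit vector `(cos θᵢ, sin θᵢ) ∈ ℝ²`. -/
noncomputable def phasor {V : Type*} (θ : V → ℝ) (i : V) : ℝ × ℝ :=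
  (Real.cos (θ i), Real.sin (θ i))

/-- The Kuramoto energy `E_G(θ) = (1/2)·Σ_{i,j} A_{ij}(1 − cos(θ_i − θ_j))`. -/
noncomputable def kuramotoEnergy {V : Type*} [Fintype V] (G : SimpleGraph V)
    [DecidableRel G.Adj] (θ : V → ℝ) : ℝ :=
  (1 / 2) * ∑ i, ∑ j, (if G.Adj i j then (1 : ℝ) else 0) * (1 - Real.cos (θ i - θ j))

/-- The Hessian of the Kuramoto energy at `θ`: off-diagonal entries
`−A_{ij} cos(θ_i − θ_j)` and diagonal entries `Σ_{k ≠ i} A_{ik} cos(θ_i − θ_k)`. -/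
noncomputable def kuramotoHessian {V : Type*} [Fintype V] [DecidableEq V] (G : SimpleGraph V)
    [DecidableRel G.Adj] (θ : V → ℝ) : Matrix V V ℝ :=
  Matrix.of fun i j =>
    if i = j then ∑ k ∈ Finset.univ.erase i, (if G.Adj i k then Real.cos (θ i - θ k) else 0)
    else -(if G.Adj i j then Real.cos (θ i - θ j) else 0)

/-- `θ` is a second-order stationary point of the Kuramoto energy: the gradient
`(∇E_G(θ))_i = Σ_j A_{ij} sin(θ_i − θ_j)` vanishes and the Hessian is positive
semidefinite. -/
def IsSOSP {V : Type*} [Fintype V] [DecidableEq V] (G : SimpleGraph V)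
    [DecidableRel G.Adj] (θ : V → ℝ) : Prop :=
  (∀ i, ∑ j, (if G.Adj i j then (1 : ℝ) else 0) * Real.sin (θ i - θ j) = 0) ∧
  (kuramotoHessian G θ).PosSemidef

private lemma auxXY (a b X Y : ℝ) (hu : a ^ 2 + b ^ 2 = 1) (hg : b * X = a * Y) :
    X = a * (a * X + b * Y) ∧ Y = b * (a * X + b * Y) :=
  ⟨by linear_combination b * hg - X * hu, by linear_combination (-a) * hg - Y * hu⟩

private lemma auxSq (a b X Y s : ℝ) (hu : a ^ 2 + b ^ 2 = 1) (hX : X = a * s) (hY : Y = b * s) :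
    s ^ 2 = X ^ 2 + Y ^ 2 := by
  linear_combination (-(X + a * s)) * hX + (-(Y + b * s)) * hY - s ^ 2 * hu

theorem stmt_8 {V : Type*} [Fintype V] [DecidableEq V] (G : SimpleGraph V)
    [DecidableRel G.Adj] (C I : Set V)
    (hC : C.Nonempty) (hdisj : Disjoint C I) (hcover : C ∪ I = Set.univ)
    (hadj : ∀ a b, G.Adj a b ↔ a ≠ b ∧ (a ∈ C ∨ b ∈ C))
    (θ : V → ℝ) (hθ : IsSOSP G θ) :
    ∀ i j, phasor θ i = phasor θ j := by
  classical
  obtain ⟨hgrad, hpsd⟩ := hθ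
  have hdiag : ∀ i, 0 ≤ kuramotoHessian G θ i i := fun i => by
    have h2 := hpsd.dotProduct_mulVec_nonneg (Pi.single i 1)
    simpa [Matrix.mulVec, dotProduct, Pi.single_apply] using h2
  set Sx := ∑ j, Real.cos (θ j) with hSxdef
  set Sy := ∑ j, Real.sin (θ j) with hSydef
  set t := Real.sqrt (Sx ^ 2 + Sy ^ 2) with htdef
  -- Step 1: every clique vertex has phasor (Sx/t, Sy/t), and t ≥ 1.
  have hCmain : ∀ c ∈ C, Real.cos (θ c) * t = Sx ∧ Real.sin (θ c) * t = Sy ∧ 1 ≤ t := by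
    intro c hc
    have hg : Real.sin (θ c) * Sx - Real.cos (θ c) * Sy = 0 := by
      have h := hgrad c
      have he : ∀ j ∈ (Finset.univ : Finset V),
          (if G.Adj c j then (1 : ℝ) else 0) * Real.sin (θ c - θ j)
            = Real.sin (θ c) * Real.cos (θ j) - Real.cos (θ c) * Real.sin (θ j) := by
        intro j _
        by_cases hj : j = c
        · subst hj
          rw [if_neg (G.irrefl), zero_mul]; ring
        · have hadj' : G.Adj c j := (hadj c j).2 ⟨fun h' => hj h'.symm, Or.inl hc⟩
          rw [if_pos hadj', one_mul, Real.sin_sub]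
      rw [Finset.sum_congr rfl he, Finset.sum_sub_distrib, ← Finset.mul_sum,
        ← Finset.mul_sum] at h
      exact h
    have hd : 1 ≤ Real.cos (θ c) * Sx + Real.sin (θ c) * Sy := by
      have h := hdiag c
      have he : kuramotoHessian G θ c c
          = Real.cos (θ c) * Sx + Real.sin (θ c) * Sy - 1 := by
        have h1 : ∀ k ∈ Finset.univ.erase c,
            (if G.Adj c k then Real.cos (θ c - θ k) else 0)
              = Real.cos (θ c) * Real.cos (θ k) + Real.sin (θ c) * Real.sin (θ k) := by
          intro k hk
          have hkc : k ≠ c := Finset.ne_of_mem_erase hk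
          have hadj' : G.Adj c k := (hadj c k).2 ⟨fun h' => hkc h'.symm, Or.inl hc⟩
          rw [if_pos hadj', Real.cos_sub]
        rw [kuramotoHessian]
        simp only [Matrix.of_apply, if_pos rfl, if_true]
        rw [Finset.sum_congr rfl h1, Finset.sum_erase_eq_sub (Finset.mem_univ c),
          Finset.sum_add_distrib, ← Finset.mul_sum, ← Finset.mul_sum]
        have h2 := Real.sin_sq_add_cos_sq (θ c)
        linear_combination -h2
      rw [he] at h; linarith
    have hu : Real.cos (θ c) ^ 2 + Real.sin (θ c) ^ 2 = 1 := Real.cos_sq_add_sin_sq (θ c)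
    have hg' : Real.sin (θ c) * Sx = Real.cos (θ c) * Sy := by linarith
    obtain ⟨hX, hY⟩ := auxXY _ _ _ _ hu hg'
    set s := Real.cos (θ c) * Sx + Real.sin (θ c) * Sy with hsdef
    have hsq : s ^ 2 = Sx ^ 2 + Sy ^ 2 := auxSq _ _ _ _ _ hu hX hY
    have hspos : (0 : ℝ) < s := by linarith
    have hts : t = s := by rw [htdef, ← hsq, Real.sqrt_sq hspos.le]
    refine ⟨?_, ?_, ?_⟩
    · rw [hts]; linarith [hX]
    · rw [hts]; linarith [hY]
    · rw [hts]; exact hd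
  obtain ⟨c₀, hc₀⟩ := hC
  have ht1 : 1 ≤ t := (hCmain c₀ hc₀).2.2
  have htpos : (0 : ℝ) < t := by linarith
  have htt : t ^ 2 = Sx ^ 2 + Sy ^ 2 := Real.sq_sqrt (by positivity)
  -- Step 2: every independent-set vertex also has phasor (Sx/t, Sy/t).
  have hImain : ∀ i ∈ I, Real.cos (θ i) * t = Sx ∧ Real.sin (θ i) * t = Sy := by
    intro i hi
    have hiC : i ∉ C := fun h => Set.disjoint_left.mp hdisj h hi
    have hadjI : ∀ j, G.Adj i j ↔ j ∈ C := by
      intro j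
      rw [hadj]
      constructor
      · rintro ⟨-, hj | hj⟩
        · exact absurd hj hiC
        · exact hj
      · intro hj
        exact ⟨fun h' => hiC (h' ▸ hj), Or.inr hj⟩
    set Fc : Finset V := Finset.univ.filter (fun v => v ∈ C) with hFc
    set CxF := ∑ j ∈ Fc, Real.cos (θ j) with hCxF
    set CyF := ∑ j ∈ Fc, Real.sin (θ j) with hCyF
    set M := (Fc.card : ℝ) with hMdef
    have hMpos : (0 : ℝ) < M := by
      have : c₀ ∈ Fc := Finset.mem_filter.2 ⟨Finset.mem_univ _, hc₀⟩
      have h3 := Finset.card_pos.2 ⟨c₀, this⟩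
      rw [hMdef]
      exact_mod_cast h3
    have hCxt : CxF * t = M * Sx := by
      rw [hCxF, Finset.sum_mul]
      rw [Finset.sum_congr rfl fun j hj => ((hCmain j (Finset.mem_filter.1 hj).2).1 : _)]
      rw [Finset.sum_const, nsmul_eq_mul]
    have hCyt : CyF * t = M * Sy := by
      rw [hCyF, Finset.sum_mul]
      rw [Finset.sum_congr rfl fun j hj => ((hCmain j (Finset.mem_filter.1 hj).2).2.1 : _)]
      rw [Finset.sum_const, nsmul_eq_mul]
    -- gradient at i
    have hg : Real.sin (θ i) * CxF - Real.cos (θ i) * CyF = 0 := by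
      have h := hgrad i
      have he : ∀ j ∈ (Finset.univ : Finset V),
          (if G.Adj i j then (1 : ℝ) else 0) * Real.sin (θ i - θ j)
            = if j ∈ C then
                Real.sin (θ i) * Real.cos (θ j) - Real.cos (θ i) * Real.sin (θ j) else 0 := by
        intro j _
        by_cases hj : j ∈ C
        · rw [if_pos ((hadjI j).2 hj), if_pos hj, one_mul, Real.sin_sub]
        · rw [if_neg (fun h' => hj ((hadjI j).1 h')), if_neg hj, zero_mul]
      rw [Finset.sum_congr rfl he, ← Finset.sum_filter, ← hFc, Finset.sum_sub_distrib,
        ← Finset.mul_sum, ← Finset.mul_sum, ← hCxF, ← hCyF] at h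
      exact h
    -- Hessian diagonal at i
    have hd : 0 ≤ Real.cos (θ i) * CxF + Real.sin (θ i) * CyF := by
      have h := hdiag i
      have he : kuramotoHessian G θ i i
          = Real.cos (θ i) * CxF + Real.sin (θ i) * CyF := by
        have h1 : ∀ k ∈ Finset.univ.erase i,
            (if G.Adj i k then Real.cos (θ i - θ k) else 0)
              = if k ∈ C then
                  Real.cos (θ i) * Real.cos (θ k) + Real.sin (θ i) * Real.sin (θ k) else 0 := by
          intro k _
          by_cases hk : k ∈ C
          · rw [if_pos ((hadjI k).2 hk), if_pos hk, Real.cos_sub]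
          · rw [if_neg (fun h' => hk ((hadjI k).1 h')), if_neg hk]
        rw [kuramotoHessian]
        simp only [Matrix.of_apply, if_pos rfl, if_true]
        rw [Finset.sum_congr rfl h1, Finset.sum_erase_eq_sub (Finset.mem_univ i),
          if_neg hiC, sub_zero, ← Finset.sum_filter, ← hFc, Finset.sum_add_distrib,
          ← Finset.mul_sum, ← Finset.mul_sum, ← hCxF, ← hCyF]
      rw [he] at h; exact h
    -- conclude
    have hu : Real.cos (θ i) ^ 2 + Real.sin (θ i) ^ 2 = 1 := Real.cos_sq_add_sin_sq (θ i)
    have hg' : Real.sin (θ i) * Sx = Real.cos (θ i) * Sy := by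
      have h0 : M * (Real.sin (θ i) * Sx - Real.cos (θ i) * Sy) = 0 := by
        have h4 : (Real.sin (θ i) * CxF - Real.cos (θ i) * CyF) * t = 0 * t := by rw [hg]
        linear_combination h4 - Real.sin (θ i) * hCxt + Real.cos (θ i) * hCyt
      have := mul_eq_zero.1 h0
      rcases this with h | h
      · exact absurd h hMpos.ne'
      · linarith
    have hd' : 0 ≤ Real.cos (θ i) * Sx + Real.sin (θ i) * Sy := by
      have h0 : 0 ≤ M * (Real.cos (θ i) * Sx + Real.sin (θ i) * Sy) := by
        have h4 : 0 ≤ (Real.cos (θ i) * CxF + Real.sin (θ i) * CyF) * t :=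
          mul_nonneg hd htpos.le
        have h5 : (Real.cos (θ i) * CxF + Real.sin (θ i) * CyF) * t
            = M * (Real.cos (θ i) * Sx + Real.sin (θ i) * Sy) := by
          linear_combination Real.cos (θ i) * hCxt + Real.sin (θ i) * hCyt
        linarith [h4, h5.symm ▸ h4]
      nlinarith [hMpos, h0]
    obtain ⟨hX, hY⟩ := auxXY _ _ _ _ hu hg'
    set s := Real.cos (θ i) * Sx + Real.sin (θ i) * Sy with hsdef
    have hsq : s ^ 2 = Sx ^ 2 + Sy ^ 2 := auxSq _ _ _ _ _ hu hX hY
    have hst : s = t := by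
      have : s ^ 2 = t ^ 2 := by rw [hsq, htt]
      nlinarith [hd', htpos]
    constructor
    · rw [← hst]; linarith [hX]
    · rw [← hst]; linarith [hY]
  have hall : ∀ v, Real.cos (θ v) * t = Sx ∧ Real.sin (θ v) * t = Sy := by
    intro v
    have hv : v ∈ C ∪ I := hcover ▸ Set.mem_univ v
    rcases hv with hv | hv
    · exact ⟨(hCmain v hv).1, (hCmain v hv).2.1⟩
    · exact hImain v hv
  intro i j
  obtain ⟨hxi, hyi⟩ := hall i
  obtain ⟨hxj, hyj⟩ := hall j
  unfold phasor
  have hx : Real.cos (θ i) = Real.cos (θ j) :=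
    mul_right_cancel₀ htpos.ne' (by rw [hxi, hxj])
  have hy : Real.sin (θ i) = Real.sin (θ j) :=
    mul_right_cancel₀ htpos.ne' (by rw [hyi, hyj])
  rw [hx, hy]
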